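/- For every small cofiltered category J, there exists a cofinite directed partial order I (a directed poset in which every element has only finitely many predecessors) and a cofinal (initial) functor I → J. -/

import Mathlib

open CategoryTheory

universe u
namespace CofInitAux

variable (J : Type u) [SmallCategory J]

abbrev Mor : Type u := Σ a : J, Σ b : J, a ⟶ b

variable {J}

@[ext]
structure CofData (J : Type u) [SmallCategory J] : Type u where
  O : Set J
  A : Set (Mor J)
  x : J
  Φ : Set (Mor J)
  n : ℕ

structure Good (D : CofData J) : Prop where
  hO : D.O.Finite
  hA : D.A.Finite
  hΦ : D.Φ.Finite
  hAO : ∀ m ∈ D.A, m.1 ∈ D.O ∧ m.2.1 ∈ D.O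
  hΦshape : ∀ m ∈ D.Φ, m.1 = D.x ∧ m.2.1 ∈ D.O
  hΦex : ∀ o ∈ D.O, ∃ f : D.x ⟶ o, (⟨D.x, o, f⟩ : Mor J) ∈ D.Φ
  hΦuniq : ∀ (o : J) (f g : D.x ⟶ o),
    (⟨D.x, o, f⟩ : Mor J) ∈ D.Φ → (⟨D.x, o, g⟩ : Mor J) ∈ D.Φ → f = g
  cone : ∀ (a b : J) (f : a ⟶ b) (g : D.x ⟶ a) (h : D.x ⟶ b),
    (⟨a, b, f⟩ : Mor J) ∈ D.A → (⟨D.x, a, g⟩ : Mor J) ∈ D.Φ →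
    (⟨D.x, b, h⟩ : Mor J) ∈ D.Φ → g ≫ f = h

variable (J) in
def Cof : Type u := {D : CofData J // Good D}

instance : PartialOrder (Cof J) where
  le D D' := D = D' ∨
    (D.1.O ∪ {D.1.x} ⊆ D'.1.O ∧ D.1.A ∪ D.1.Φ ⊆ D'.1.A ∧ D.1.n < D'.1.n)
  le_refl D := Or.inl rfl
  le_trans D D' D'' h1 h2 := by
    rcases h1 with rfl | h1
    · exact h2
    rcases h2 with rfl | h2
    · exact Or.inr h1
    exact Or.inr ⟨h1.1.trans (Set.subset_union_left.trans h2.1),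
      h1.2.1.trans (Set.subset_union_left.trans h2.2.1), h1.2.2.trans h2.2.2⟩
  le_antisymm D D' h1 h2 := by
    rcases h1 with rfl | h1
    · rfl
    rcases h2 with rfl | h2
    · rfl
    exact absurd (h1.2.2.trans h2.2.2) (lt_irrefl _)

lemma le_strict {D D' : Cof J} (h : D ≤ D') (hne : D ≠ D') :
    D.1.O ∪ {D.1.x} ⊆ D'.1.O ∧ D.1.A ∪ D.1.Φ ⊆ D'.1.A ∧ D.1.n < D'.1.n :=
  h.resolve_left hne

/-- The chosen cone map of an element. -/
noncomputable def phi (D : Cof J) {o : J} (ho : o ∈ D.1.O) : D.1.x ⟶ o :=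
  (D.2.hΦex o ho).choose

lemma phi_mem (D : Cof J) {o : J} (ho : o ∈ D.1.O) :
    (⟨D.1.x, o, phi D ho⟩ : Mor J) ∈ D.1.Φ :=
  (D.2.hΦex o ho).choose_spec

lemma phi_eq (D : Cof J) {o : J} (ho : o ∈ D.1.O) {f : D.1.x ⟶ o}
    (hf : (⟨D.1.x, o, f⟩ : Mor J) ∈ D.1.Φ) : f = phi D ho :=
  D.2.hΦuniq o f (phi D ho) hf (phi_mem D ho)

/-- Graph of a cone as a set of morphism-triples. -/
def graphOf (v : J) (Ob : Set J) (T : ∀ o ∈ Ob, v ⟶ o) : Set (Mor J) :=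
  Set.range (fun p : Ob => (⟨v, p.1, T p.1 p.2⟩ : Mor J))

lemma mem_graphOf {v : J} {Ob : Set J} {T : ∀ o ∈ Ob, v ⟶ o} {o : J} (ho : o ∈ Ob) :
    (⟨v, o, T o ho⟩ : Mor J) ∈ graphOf v Ob T :=
  ⟨⟨o, ho⟩, rfl⟩

lemma graphOf_eq {v : J} {Ob : Set J} {T : ∀ o ∈ Ob, v ⟶ o} {o : J} {f : v ⟶ o}
    (hf : (⟨v, o, f⟩ : Mor J) ∈ graphOf v Ob T) : ∃ ho : o ∈ Ob, f = T o ho := by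
  obtain ⟨⟨p, hp⟩, h⟩ := hf
  simp only at h
  injection h with h1 h2
  injection h2 with h3 h4
  subst h3
  rw [heq_eq_eq] at h4
  exact ⟨hp, h4.symm⟩

lemma graphOf_shape {v : J} {Ob : Set J} {T : ∀ o ∈ Ob, v ⟶ o} {m : Mor J}
    (hm : m ∈ graphOf v Ob T) : m.1 = v ∧ m.2.1 ∈ Ob := by
  obtain ⟨⟨p, hp⟩, rfl⟩ := hm
  exact ⟨rfl, hp⟩

lemma graphOf_finite {v : J} {Ob : Set J} (hOb : Ob.Finite) (T : ∀ o ∈ Ob, v ⟶ o) :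
    (graphOf v Ob T).Finite := by
  haveI : Finite Ob := hOb.to_subtype
  exact Set.finite_range _


variable [IsCofiltered J]

lemma cone_over (Ob : Set J) (hO : Ob.Finite) (A : Set (Mor J)) (hA : A.Finite)
    (hAO : ∀ m ∈ A, m.1 ∈ Ob ∧ m.2.1 ∈ Ob) :
    ∃ (v : J) (T : ∀ o ∈ Ob, v ⟶ o), ∀ (a b : J) (f : a ⟶ b) (ha : a ∈ Ob) (hb : b ∈ Ob),
      (⟨a, b, f⟩ : Mor J) ∈ A → T a ha ≫ f = T b hb := by
  classical
  set OF := hO.toFinset with hOF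
  have hmem : ∀ {o : J}, o ∈ Ob ↔ o ∈ OF := fun {o} => (hO.mem_toFinset).symm
  let H : Finset (Σ' (X Y : J) (_ : X ∈ OF) (_ : Y ∈ OF), X ⟶ Y) :=
    hA.toFinset.attach.image (fun m =>
      ⟨m.1.1, m.1.2.1, hmem.mp (hAO m.1 (hA.mem_toFinset.mp m.2)).1,
        hmem.mp (hAO m.1 (hA.mem_toFinset.mp m.2)).2, m.1.2.2⟩)
  obtain ⟨S, T, w⟩ := IsCofiltered.inf_exists OF H
  refine ⟨S, fun o ho => T (hmem.mp ho), ?_⟩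
  intro a b f ha hb hf
  exact w (hmem.mp ha) (hmem.mp hb)
    (Finset.mem_image_of_mem _ (Finset.mem_attach _ ⟨⟨a, b, f⟩, hA.mem_toFinset.mpr hf⟩))


/-- The trivial element with vertex `j` and empty diagram. -/
def elt0 (j : J) : Cof J :=
  ⟨⟨∅, ∅, j, ∅, 0⟩, by
    constructor <;> simp [Set.finite_empty]⟩

lemma cof_directed : IsDirected (Cof J) (· ≤ ·) := by
  constructor
  intro D1 D2
  set Ob : Set J := D1.1.O ∪ D2.1.O ∪ {D1.1.x} ∪ {D2.1.x} with hOb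
  set A : Set (Mor J) := D1.1.A ∪ D1.1.Φ ∪ D2.1.A ∪ D2.1.Φ with hA
  have hObfin : Ob.Finite := by
    simp only [hOb]
    exact (((D1.2.hO.union D2.2.hO).union (Set.finite_singleton _)).union
      (Set.finite_singleton _))
  have hAfin : A.Finite := by
    simp only [hA]
    exact ((D1.2.hA.union D1.2.hΦ).union D2.2.hA).union D2.2.hΦ
  have hO1 : D1.1.O ⊆ Ob := fun o ho => by simp [hOb]; tauto
  have hO2 : D2.1.O ⊆ Ob := fun o ho => by simp [hOb]; tauto
  have hx1 : D1.1.x ∈ Ob := by simp [hOb]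
  have hx2 : D2.1.x ∈ Ob := by simp [hOb]
  have hAO : ∀ m ∈ A, m.1 ∈ Ob ∧ m.2.1 ∈ Ob := by
    intro m hm
    simp only [hA, Set.mem_union] at hm
    rcases hm with ((h | h) | h) | h
    · exact ⟨hO1 (D1.2.hAO m h).1, hO1 (D1.2.hAO m h).2⟩
    · refine ⟨?_, hO1 (D1.2.hΦshape m h).2⟩
      rw [(D1.2.hΦshape m h).1]; exact hx1
    · exact ⟨hO2 (D2.2.hAO m h).1, hO2 (D2.2.hAO m h).2⟩
    · refine ⟨?_, hO2 (D2.2.hΦshape m h).2⟩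
      rw [(D2.2.hΦshape m h).1]; exact hx2
  obtain ⟨v, T, w⟩ := cone_over Ob hObfin A hAfin hAO
  refine ⟨⟨⟨Ob, A, v, graphOf v Ob T, max D1.1.n D2.1.n + 1⟩, ?_⟩, ?_, ?_⟩
  · constructor
    · exact hObfin
    · exact hAfin
    · exact graphOf_finite hObfin T
    · exact hAO
    · exact fun m hm => graphOf_shape hm
    · exact fun o ho => ⟨T o ho, mem_graphOf ho⟩
    · intro o f g hf hg
      obtain ⟨ho, rfl⟩ := graphOf_eq hf
      obtain ⟨ho', h⟩ := graphOf_eq hg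
      exact h.symm
    · intro a b f g h hfA hg hh
      obtain ⟨ha, rfl⟩ := graphOf_eq hg
      obtain ⟨hb, rfl⟩ := graphOf_eq hh
      exact w a b f ha hb hfA
  · refine Or.inr ⟨?_, ?_, ?_⟩
    · exact Set.union_subset hO1 (Set.singleton_subset_iff.mpr hx1)
    · intro m hm
      simp only [hA, Set.mem_union]
      rcases hm with h | h
      · tauto
      · tauto
    · simp
  · refine Or.inr ⟨?_, ?_, ?_⟩
    · exact Set.union_subset hO2 (Set.singleton_subset_iff.mpr hx2)
    · intro m hm
      simp only [hA, Set.mem_union]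
      rcases hm with h | h
      · tauto
      · tauto
    · simp

lemma cof_cofinite (s : Cof J) : {t : Cof J | t ≤ s}.Finite := by
  have h1 : {t : Cof J | t ≤ s} ⊆ {s} ∪
      {t : Cof J | t.1.O ⊆ s.1.O ∧ t.1.A ⊆ s.1.A ∧ t.1.x ∈ s.1.O ∧
        t.1.Φ ⊆ s.1.A ∧ t.1.n < s.1.n} := by
    intro t ht
    rcases ht with rfl | h
    · exact Set.mem_union_left _ rfl
    · refine Set.mem_union_right _ ⟨?_, ?_, ?_, ?_, h.2.2⟩
      · exact (Set.union_subset_iff.mp h.1).1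
      · exact (Set.union_subset_iff.mp h.2.1).1
      · exact h.1 (Set.mem_union_right _ rfl)
      · exact (Set.union_subset_iff.mp h.2.1).2
  refine Set.Finite.subset (Set.Finite.union (Set.finite_singleton _) ?_) h1
  set f : Cof J → Set J × Set (Mor J) × J × Set (Mor J) × ℕ :=
    fun t => (t.1.O, t.1.A, t.1.x, t.1.Φ, t.1.n) with hf
  have hinj : Function.Injective f := by
    intro a b hab
    simp only [hf, Prod.mk.injEq] at hab
    apply Subtype.ext
    ext1 <;> tauto
  apply Set.Finite.of_finite_image _ hinj.injOn
  apply Set.Finite.subset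
    (Set.Finite.prod s.2.hO.finite_subsets
      (Set.Finite.prod s.2.hA.finite_subsets
        (Set.Finite.prod s.2.hO
          (Set.Finite.prod s.2.hA.finite_subsets (Set.finite_Iio s.1.n)))))
  rintro p ⟨t, ⟨h1', h2', h3', h4', h5'⟩, rfl⟩
  exact ⟨h1', h2', h3', h4', h5'⟩

/-- The arrow of `J` associated to an inequality in `Cof J`. -/
noncomputable def mapAux (D D' : Cof J) (h : D ≤ D') : D'.1.x ⟶ D.1.x :=
  letI := Classical.dec (D' = D)
  if heq : D' = D then eqToHom (by rw [heq]) else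
    phi D' ((le_strict h (fun e => heq e.symm)).1
      (Set.mem_union_right _ (Set.mem_singleton _)))

lemma mapAux_comp (D D' D'' : Cof J) (h1 : D ≤ D') (h2 : D' ≤ D'') (h3 : D ≤ D'') :
    mapAux D D'' h3 = mapAux D' D'' h2 ≫ mapAux D D' h1 := by
  by_cases e1 : D' = D
  · subst e1
    simp [mapAux]
  by_cases e2 : D'' = D'
  · subst e2
    simp [mapAux]
  have s1 := le_strict h1 (fun h => e1 h.symm)
  have s2 := le_strict h2 (fun h => e2 h.symm)
  have e3 : D'' ≠ D := by
    intro e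
    rw [e] at s2
    exact absurd (s1.2.2.trans s2.2.2) (lt_irrefl _)
  simp only [mapAux, dif_neg e1, dif_neg e2, dif_neg e3]
  refine (D''.2.cone D'.1.x D.1.x (phi D' _) (phi D'' _) (phi D'' _) ?_
    (phi_mem _ _) (phi_mem _ _)).symm
  exact s2.2.1 (Set.mem_union_right _ (phi_mem D' _))

/-- The canonical functor `(Cof J)ᵒᵖ ⥤ J`. -/
noncomputable def theF : (Cof J)ᵒᵖ ⥤ J where
  obj D := D.unop.1.x
  map {a b} f := mapAux b.unop a.unop (leOfHom f.unop)
  map_id D := by simp [mapAux]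
  map_comp {a b c} f g := mapAux_comp c.unop b.unop a.unop
    (leOfHom g.unop) (leOfHom f.unop) ((leOfHom g.unop).trans (leOfHom f.unop))


lemma theF_initial : (theF (J := J)).Initial := by
  haveI : Nonempty (Cof J) := ⟨elt0 (IsCofiltered.nonempty (C := J)).some⟩
  haveI : IsDirected (Cof J) (· ≤ ·) := cof_directed
  apply Functor.initial_of_exists_of_isCofiltered
  · intro d
    exact ⟨Opposite.op (elt0 d), ⟨𝟙 d⟩⟩
  · intro d c s s'
    set D := c.unop with hD
    set Ob' : Set J := D.1.O ∪ {D.1.x} ∪ {d} with hOb'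
    set A' : Set (Mor J) := D.1.A ∪ D.1.Φ ∪ {⟨D.1.x, d, s⟩, ⟨D.1.x, d, s'⟩} with hA'
    have hxOb' : D.1.x ∈ Ob' := by simp [hOb']
    have hdOb' : d ∈ Ob' := by simp [hOb']
    have hObfin : Ob'.Finite := by
      simp only [hOb']
      exact (D.2.hO.union (Set.finite_singleton _)).union (Set.finite_singleton _)
    have hAfin : A'.Finite := by
      simp only [hA']
      exact (D.2.hA.union D.2.hΦ).union
        ((Set.finite_singleton _).insert _)
    have hsub : D.1.O ∪ {D.1.x} ⊆ Ob' := by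
      simp only [hOb']
      exact Set.subset_union_left
    have hAO : ∀ m ∈ A', m.1 ∈ Ob' ∧ m.2.1 ∈ Ob' := by
      intro m hm
      simp only [hA', Set.mem_union] at hm
      rcases hm with (h | h) | h
      · exact ⟨hsub (Set.mem_union_left _ (D.2.hAO m h).1),
          hsub (Set.mem_union_left _ (D.2.hAO m h).2)⟩
      · refine ⟨?_, hsub (Set.mem_union_left _ (D.2.hΦshape m h).2)⟩
        rw [(D.2.hΦshape m h).1]; exact hxOb'
      · simp only [Set.mem_insert_iff, Set.mem_singleton_iff] at h
        rcases h with rfl | rfl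
        · exact ⟨hxOb', hdOb'⟩
        · exact ⟨hxOb', hdOb'⟩
    obtain ⟨v, T, w⟩ := cone_over Ob' hObfin A' hAfin hAO
    set T' : ∀ o ∈ D.1.O ∪ {D.1.x}, v ⟶ o := fun o ho => T o (hsub ho) with hT'
    have hmem' : ∀ m ∈ D.1.A ∪ D.1.Φ, m.1 ∈ D.1.O ∪ {D.1.x} ∧ m.2.1 ∈ D.1.O ∪ {D.1.x} := by
      intro m hm
      rcases hm with h | h
      · exact ⟨Set.mem_union_left _ (D.2.hAO m h).1, Set.mem_union_left _ (D.2.hAO m h).2⟩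
      · refine ⟨?_, Set.mem_union_left _ (D.2.hΦshape m h).2⟩
        rw [(D.2.hΦshape m h).1]
        exact Set.mem_union_right _ (Set.mem_singleton _)
    set Edata : CofData J := ⟨D.1.O ∪ {D.1.x}, D.1.A ∪ D.1.Φ, v,
        graphOf v (D.1.O ∪ {D.1.x}) T', D.1.n + 1⟩ with hEd
    have hgood : Good Edata := by
      constructor
      · exact D.2.hO.union (Set.finite_singleton _)
      · exact D.2.hA.union D.2.hΦ
      · exact graphOf_finite (D.2.hO.union (Set.finite_singleton _)) T'
      · exact hmem'
      · exact fun m hm => graphOf_shape hm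
      · exact fun o ho => ⟨T' o ho, mem_graphOf ho⟩
      · intro o f g hf hg
        obtain ⟨ho, rfl⟩ := graphOf_eq hf
        obtain ⟨ho', h⟩ := graphOf_eq hg
        exact h.symm
      · intro a b f g h hfA hg hh
        obtain ⟨ha, rfl⟩ := graphOf_eq hg
        obtain ⟨hb, rfl⟩ := graphOf_eq hh
        refine w a b f (hsub ha) (hsub hb) ?_
        simp only [hA', Set.mem_union]
        left; exact hfA
    set E : Cof J := ⟨Edata, hgood⟩ with hE
    have hDE : D ≤ E := Or.inr ⟨subset_rfl, subset_rfl, Nat.lt_succ_self _⟩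
    have hED : E ≠ D := by
      intro e
      have : D.1.n + 1 = D.1.n := congrArg (fun t : Cof J => t.1.n) e
      omega
    refine ⟨Opposite.op E, (homOfLE hDE).op, ?_⟩
    have hxE : D.1.x ∈ E.1.O := Set.mem_union_right _ (Set.mem_singleton _)
    have hmap : theF.map (homOfLE hDE).op = phi E hxE := by
      show mapAux D E hDE = phi E hxE
      simp only [mapAux, dif_neg hED]
    rw [hmap]
    have hphi : phi E hxE = T D.1.x hxOb' := by
      refine (phi_eq E hxE ?_).symm
      have := mem_graphOf (T := T') hxE
      exact this
    rw [hphi]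
    have e1 : T D.1.x hxOb' ≫ s = T d hdOb' := by
      refine w D.1.x d s hxOb' hdOb' ?_
      simp [hA']
    have e2 : T D.1.x hxOb' ≫ s' = T d hdOb' := by
      refine w D.1.x d s' hxOb' hdOb' ?_
      simp [hA']
    exact e1.trans e2.symm

end CofInitAux

/-- For every small cofiltered category `J` there exist a cofinite directed
partial order `I` (directed, and every element has only finitely many
predecessors) and a cofinal (initial) functor `Iᵒᵖ ⥤ J`.  (Viewing the poset
`I` as a category with an arrow `s ⟶ t` whenever `s ≥ t`, i.e. taking `Iᵒᵖ`
for the order category of `I`.) -/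
theorem exists_cofinite_directed_initial (J : Type u) [SmallCategory J]
    [IsCofiltered J] :
    ∃ (I : Type u) (_ : PartialOrder I) (_ : Nonempty I),
      IsDirected I (· ≤ ·) ∧ (∀ s : I, {t : I | t ≤ s}.Finite) ∧
      ∃ F : Iᵒᵖ ⥤ J, F.Initial := by
  exact ⟨CofInitAux.Cof J, inferInstance,
    ⟨CofInitAux.elt0 (IsCofiltered.nonempty (C := J)).some⟩,
    CofInitAux.cof_directed, CofInitAux.cof_cofinite,
    CofInitAux.theF, CofInitAux.theF_initial⟩
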